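/- arXiv:2210.03095 — 7 statements merged into one kernel-verified Lean document; each statement's English description precedes it below -/
import Mathlib

section
/- Suppose h = 1 and k ≥ 2 (so S has degree 2Δk² and we consider Hilb^{Δ+1}(S)). Then there exists no numerical wall datum w = (a,b,c) ∈ ℤ³. (This is the arithmetic core of the Corollary recovering the Markushevich–Sawon theorem: the movable cone of Hilb^{Δ+1}(S) has one chamber and Hilb^{Δ+1}(S) is a Lagrangian fibration.) -/
/-- The Mukai pairing on the algebraic Mukai lattice ℤ³ of a K3 surface `S` with
`Pic(S) = ℤ·H`, `H² = 2Δk²`, identifying `(r, xH, s)` with `(r, x, s)`: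
`⟨(r,x,s),(r′,x′,s′)⟩ = 2Δk²xx′ − rs′ − r′s`. -/
def mukaiPair (Δ k : ℤ) (w w' : ℤ × ℤ × ℤ) : ℤ :=
  2 * Δ * k ^ 2 * w.2.1 * w'.2.1 - w.1 * w'.2.2 - w'.1 * w.2.2

/-- The Mukai vector `v = (1, 0, −Δh²)` of the Hilbert scheme of `Δh²+1` points. -/
def mukaiV (Δ h : ℤ) : ℤ × ℤ × ℤ := (1, 0, -(Δ * h ^ 2))

/-- The slope `Γ = −2Δk²b / (Δh²a + c)` associated to `w = (a,b,c)`. -/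
def wallGamma (Δ h k : ℤ) (w : ℤ × ℤ × ℤ) : ℚ :=
  ((-(2 * Δ * k ^ 2 * w.2.1) : ℤ) : ℚ) / ((Δ * h ^ 2 * w.1 + w.2.2 : ℤ) : ℚ)

/-- `w = (a,b,c) ∈ ℤ³` is a numerical wall datum (for the interior of the movable cone of
`Hilb^{Δh²+1}(S)`) if:
(W1) `Δh²a + c ≠ 0` and `Γ := −2Δk²b/(Δh²a + c)` satisfies `2k²/(h²+k²+1) ≤ Γ < k/h`;
(W2) `Γ·b + a ≥ 0` and `−Γ·b + 1 − a ≥ 0`;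
(W3) either `⟨w,w⟩ = −2` and `−Δh² ≤ ⟨w,v⟩ ≤ Δh²`, or `⟨w,w⟩ ≥ 0`, `2⟨w,w⟩ < Δh²` and
     `2⟨w,w⟩ + 1 ≤ ⟨w,v⟩ ≤ Δh²`;
(W4) `⟨w,v⟩² > 2Δh²·⟨w,w⟩`. -/
def IsWallDatum (Δ h k : ℤ) (w : ℤ × ℤ × ℤ) : Prop :=
  Δ * h ^ 2 * w.1 + w.2.2 ≠ 0 ∧
  (2 * (k : ℚ) ^ 2 / ((h : ℚ) ^ 2 + (k : ℚ) ^ 2 + 1) ≤ wallGamma Δ h k w ∧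
    wallGamma Δ h k w < (k : ℚ) / (h : ℚ)) ∧
  (0 ≤ wallGamma Δ h k w * (w.2.1 : ℚ) + (w.1 : ℚ) ∧
    0 ≤ -(wallGamma Δ h k w * (w.2.1 : ℚ)) + 1 - (w.1 : ℚ)) ∧
  ((mukaiPair Δ k w w = -2 ∧ -(Δ * h ^ 2) ≤ mukaiPair Δ k w (mukaiV Δ h) ∧
      mukaiPair Δ k w (mukaiV Δ h) ≤ Δ * h ^ 2) ∨
    (0 ≤ mukaiPair Δ k w w ∧ 2 * mukaiPair Δ k w w < Δ * h ^ 2 ∧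
      2 * mukaiPair Δ k w w + 1 ≤ mukaiPair Δ k w (mukaiV Δ h) ∧
      mukaiPair Δ k w (mukaiV Δ h) ≤ Δ * h ^ 2)) ∧
  (mukaiPair Δ k w (mukaiV Δ h)) ^ 2 > 2 * Δ * h ^ 2 * mukaiPair Δ k w w

set_option maxHeartbeats 2000000 in
/-- Corollary (Markushevich–Sawon, arithmetic core): if `h = 1` and `k ≥ 2` then there is
no numerical wall datum, so the movable cone of `Hilb^{Δ+1}(S)` has one chamber. -/
theorem no_wall_datum_of_h_eq_one (Δ h k : ℤ) (hΔ : 0 < Δ) (hh : h = 1) (hk : 2 ≤ k)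
    (hgcd : Int.gcd h k = 1) :
    ¬ ∃ w : ℤ × ℤ × ℤ, IsWallDatum Δ h k w := by
  subst hh
  rintro ⟨⟨a, b, c⟩, hw⟩
  obtain ⟨hD0, ⟨hΓ1, hΓ2⟩, ⟨h2a, h2b⟩, h3, h4⟩ := hw
  simp only [mukaiPair, mukaiV, wallGamma] at hD0 hΓ1 hΓ2 h2a h2b h3 h4
  -- b ≠ 0
  have hkQ : (2:ℚ) ≤ (k:ℚ) := by exact_mod_cast hk
  have hb : b ≠ 0 := by
    intro hb0
    rw [hb0] at hΓ1
    norm_num at hΓ1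
    have hpos : (0:ℚ) < 2 * (k:ℚ) ^ 2 / (((1:ℤ):ℚ) ^ 2 + (k:ℚ) ^ 2 + 1) := by
      apply div_pos <;> nlinarith
    linarith
  have hbpos : 0 < |b| := abs_pos.mpr hb
  -- integer abbreviations
  obtain ⟨D, hDd⟩ : ∃ D : ℤ, D = Δ * a + c := ⟨_, rfl⟩
  obtain ⟨j, hjd⟩ : ∃ j : ℤ, j = Δ * a - c := ⟨_, rfl⟩
  obtain ⟨q, hqd⟩ : ∃ q : ℤ, q = 2 * Δ * k ^ 2 * b ^ 2 - 2 * a * c := ⟨_, rfl⟩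
  obtain ⟨E, hEd⟩ : ∃ E : ℤ, E = j ^ 2 - 2 * Δ * q := ⟨_, rfl⟩
  have hD : D ≠ 0 := by rw [hDd]; intro h0; exact hD0 (by linarith)
  -- restated W3, W4
  have h4' : 2 * Δ * q < j ^ 2 := by rw [hjd, hqd]; nlinarith [h4]
  have h3' : (q = -2 ∧ -Δ ≤ j ∧ j ≤ Δ) ∨ (0 ≤ q ∧ 2 * q < Δ ∧ 2 * q + 1 ≤ j ∧ j ≤ Δ) := by
    rw [hjd, hqd]
    rcases h3 with ⟨e, l, r⟩ | ⟨l1, l2, l3, l4⟩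
    · exact Or.inl ⟨by linarith, by linarith, by linarith⟩
    · exact Or.inr ⟨by linarith, by linarith, by linarith, by linarith⟩
  have hE1 : 1 ≤ E := by rw [hEd]; omega
  have hjΔ : j ≤ Δ := by rcases h3' with ⟨_, _, h⟩ | ⟨_, _, _, h⟩ <;> exact h
  have hEb : E ≤ Δ ^ 2 + 4 * Δ := by
    rcases h3' with ⟨e, l, r⟩ | ⟨l1, l2, l3, l4⟩ <;> rw [hEd] <;> nlinarith
  -- key square identity
  have hE : D ^ 2 = 4 * Δ ^ 2 * k ^ 2 * b ^ 2 + E := by rw [hDd, hEd, hjd, hqd]; ring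
  have hMsq : (2 * Δ * k * |b|) ^ 2 = 4 * Δ ^ 2 * k ^ 2 * b ^ 2 := by
    have : (2 * Δ * k * |b|) ^ 2 = 4 * Δ ^ 2 * k ^ 2 * |b| ^ 2 := by ring
    rw [this, sq_abs]
  have hNsq : |D| ^ 2 = D ^ 2 := sq_abs D
  have hMpos : 0 < 2 * Δ * k * |b| :=
    mul_pos (mul_pos (mul_pos two_pos hΔ) (by linarith)) hbpos
  -- r ≥ 1
  have hfact : (|D| - 2 * Δ * k * |b|) * (|D| + 2 * Δ * k * |b|) = E := by
    linear_combination hNsq + hE - hMsq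
  have hNM : 2 * Δ * k * |b| < |D| := by
    by_contra hcon
    push_neg at hcon
    have h1 : |D| - 2 * Δ * k * |b| ≤ 0 := by linarith
    have h2 : (0:ℤ) ≤ |D| + 2 * Δ * k * |b| := by linarith [abs_nonneg D]
    have h3 : (|D| - 2 * Δ * k * |b|) * (|D| + 2 * Δ * k * |b|) ≤ 0 :=
      mul_nonpos_iff.mpr (Or.inr ⟨h1, h2⟩)
    linarith [hfact, hE1]
  obtain ⟨r, hrd⟩ : ∃ r : ℤ, r = |D| - 2 * Δ * k * |b| := ⟨_, rfl⟩
  have hr1 : 1 ≤ r := by omega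
  have hNd : |D| = 2 * Δ * k * |b| + r := by omega
  have hNsq2 : D ^ 2 = (2 * Δ * k * |b| + r) ^ 2 := by rw [← hNd, sq_abs]
  have hEr : E = r ^ 2 + 4 * Δ * k * |b| * r := by linear_combination hNsq2 - hE + hMsq
  -- bound on r
  have hkb : 2 ≤ k * |b| := by
    have := mul_le_mul_of_nonneg_right hk (abs_nonneg b)
    linarith [hbpos]
  have h8Δr : 8 * Δ * r ≤ Δ ^ 2 + 4 * Δ := by
    have h1 : (0:ℤ) ≤ 4 * Δ * r := mul_nonneg (by linarith) (by linarith)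
    have hprod : 0 ≤ (4 * Δ * r) * (k * |b| - 2) := mul_nonneg h1 (by linarith)
    linarith [hEr, hEb, hprod, sq_nonneg r]
  have hr8 : 8 * r ≤ Δ + 4 := by
    have : Δ * (8 * r) ≤ Δ * (Δ + 4) := by linarith
    exact le_of_mul_le_mul_left this hΔ
  have hrΔ : r ≤ Δ := by omega
  -- W2 in integer form
  have hDQ : ((Δ * 1 ^ 2 * a + c : ℤ) : ℚ) ≠ 0 := Int.cast_ne_zero.mpr hD0
  have hY0 : (2 * Δ * (Δ * a + c)) ≠ 0 := mul_ne_zero (by omega) (by rw [← hDd]; exact hD)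
  have hYQ : ((2 * Δ * (Δ * a + c) : ℤ) : ℚ) ≠ 0 := Int.cast_ne_zero.mpr hY0
  have hEq : ((-(2 * Δ * k ^ 2 * b) : ℤ) : ℚ) / ((Δ * 1 ^ 2 * a + c : ℤ) : ℚ) * (b : ℚ) + (a : ℚ)
      = ((2 * Δ * (a * (Δ * a + c) - 2 * Δ * k ^ 2 * b ^ 2) : ℤ) : ℚ)
        / ((2 * Δ * (Δ * a + c) : ℤ) : ℚ) := by
    have hDQ' : ((Δ:ℚ) * a + c) ≠ 0 := by
      intro h0; apply hDQ; push_cast; linarith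
    rw [show (Δ * 1 ^ 2 * a + c : ℤ) = Δ * a + c from by ring]
    push_cast
    field_simp
    ring
  rw [hEq] at h2a
  have h2b' : ((2 * Δ * (a * (Δ * a + c) - 2 * Δ * k ^ 2 * b ^ 2) : ℤ) : ℚ)
      / ((2 * Δ * (Δ * a + c) : ℤ) : ℚ) ≤ 1 := by rw [← hEq]; linarith [h2b]
  have hcast : (((2 * Δ * (a * (Δ * a + c) - 2 * Δ * k ^ 2 * b ^ 2)) * (2 * Δ * (Δ * a + c)) : ℤ) : ℚ)
      = (((2 * Δ * (a * (Δ * a + c) - 2 * Δ * k ^ 2 * b ^ 2) : ℤ) : ℚ)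
          / ((2 * Δ * (Δ * a + c) : ℤ) : ℚ)) * ((2 * Δ * (Δ * a + c) : ℤ) : ℚ) ^ 2 := by
    push_cast at hYQ ⊢
    field_simp
  have hXY1 : (0:ℤ) ≤ (2 * Δ * (a * (Δ * a + c) - 2 * Δ * k ^ 2 * b ^ 2)) * (2 * Δ * (Δ * a + c)) := by
    have h0 : (0:ℚ) ≤ (((2 * Δ * (a * (Δ * a + c) - 2 * Δ * k ^ 2 * b ^ 2)) * (2 * Δ * (Δ * a + c)) : ℤ) : ℚ) := by
      rw [hcast]; exact mul_nonneg h2a (sq_nonneg _)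
    exact_mod_cast h0
  have hXY2 : (2 * Δ * (a * (Δ * a + c) - 2 * Δ * k ^ 2 * b ^ 2)) * (2 * Δ * (Δ * a + c))
      ≤ (2 * Δ * (Δ * a + c)) ^ 2 := by
    have hmul := mul_le_mul_of_nonneg_right h2b' (sq_nonneg ((2 * Δ * (Δ * a + c) : ℤ) : ℚ))
    rw [one_mul] at hmul
    have h0 : (((2 * Δ * (a * (Δ * a + c) - 2 * Δ * k ^ 2 * b ^ 2)) * (2 * Δ * (Δ * a + c)) : ℤ) : ℚ)
        ≤ (((2 * Δ * (Δ * a + c)) ^ 2 : ℤ) : ℚ) := by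
      rw [hcast]; push_cast; push_cast at hmul; linarith [hmul]
    exact_mod_cast h0
  have hXeq : 2 * Δ * (a * (Δ * a + c) - 2 * Δ * k ^ 2 * b ^ 2) = E + D * j := by
    rw [hEd, hjd, hqd, hDd]; ring
  have hYeq : 2 * Δ * (Δ * a + c) = 2 * Δ * D := by rw [hDd]
  have hX1 : 0 ≤ (E + D * j) * (2 * Δ * D) := by rw [← hXeq, ← hYeq]; exact hXY1
  have hX2 : (E + D * j) * (2 * Δ * D) ≤ (2 * Δ * D) ^ 2 := by
    rw [← hXeq, ← hYeq]; exact hXY2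
  have hdvd : (2 * Δ) ∣ (D + j) := ⟨a, by rw [hDd, hjd]; ring⟩
  have hMr2 : 0 < 2 * Δ * k * |b| * r := mul_pos hMpos (by linarith)
  rcases hD.lt_or_gt with hneg | hpos
  · -- D < 0
    have hA : E + D * j ≤ 0 := by
      by_contra hcon
      push_neg at hcon
      have hYneg : 2 * Δ * D < 0 := mul_neg_of_pos_of_neg (by linarith) hneg
      have := mul_neg_of_pos_of_neg hcon hYneg
      linarith [hX1]
    have hDMr : D = -(2 * Δ * k * |b| + r) := by
      have habs := abs_of_neg hneg
      omega
    have hMr_pos : 0 < 2 * Δ * k * |b| + r := by linarith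
    have hEj : E ≤ (2 * Δ * k * |b| + r) * j := by
      rw [hDMr] at hA; linarith [hA]
    have h5 : (2 * Δ * k * |b| + r) * r < (2 * Δ * k * |b| + r) * j := by
      linarith [hEr, hMr2, hEj]
    have hjr : r < j := lt_of_mul_lt_mul_left h5 hMr_pos.le
    have hdvd2 : (2 * Δ) ∣ (j - r) := by
      have heq : j - r = (D + j) + 2 * Δ * (k * |b|) := by rw [hDMr]; ring
      rw [heq]; exact dvd_add hdvd ⟨k * |b|, by ring⟩
    obtain ⟨t, ht⟩ := hdvd2
    rcases lt_trichotomy t 0 with h | h | h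
    · have h9 : Δ * 1 ≤ Δ * (-t) := mul_le_mul_of_nonneg_left (by linarith) hΔ.le
      linarith [ht, hjr]
    · rw [h] at ht; simp at ht; omega
    · have h9 : Δ * 1 ≤ Δ * t := mul_le_mul_of_nonneg_left (by linarith) hΔ.le
      linarith [ht, hjr, hjΔ, hr1]
  · -- D > 0
    have hYpos : 0 < 2 * Δ * D := mul_pos (by linarith) hpos
    have hA : 0 ≤ E + D * j := le_of_mul_le_mul_right (by linarith [hX1]) hYpos
    have hB : E + D * j ≤ 2 * Δ * D := le_of_mul_le_mul_right (by linarith [hX2]) hYpos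
    have hDMr : D = 2 * Δ * k * |b| + r := by rw [← abs_of_pos hpos]; exact hNd
    have hrD : r * D < E := by rw [hDMr]; linarith [hEr, hMr2]
    have h5 : D * (r + j) < D * (2 * Δ) := by linarith [hB, hrD]
    have hrj2 : r + j < 2 * Δ := lt_of_mul_lt_mul_left h5 hpos.le
    have hr2sq : 1 ≤ r ^ 2 := by
      have h0 := pow_le_pow_left₀ (by norm_num : (0:ℤ) ≤ 1) hr1 2
      simpa using h0
    have hE2rD : E < 2 * r * D := by rw [hDMr]; linarith only [hEr, hr2sq, hMr2]
    have h6 : D * 0 < D * (2 * r + j) := by linarith [hA, hE2rD]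
    have h7 : 0 < 2 * r + j := lt_of_mul_lt_mul_left h6 hpos.le
    have hdvd2 : (2 * Δ) ∣ (r + j) := by
      have heq : r + j = (D + j) - 2 * Δ * (k * |b|) := by rw [hDMr]; ring
      rw [heq]; exact dvd_sub hdvd ⟨k * |b|, by ring⟩
    obtain ⟨t, ht⟩ := hdvd2
    have ht0 : t = 0 := by
      rcases lt_trichotomy t 0 with h | h | h
      · exfalso
        have h9 : Δ * 1 ≤ Δ * (-t) := mul_le_mul_of_nonneg_left (by linarith) hΔ.le
        linarith [ht, h7, hrΔ]
      · exact h
      · exfalso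
        have h9 : Δ * 1 ≤ Δ * t := mul_le_mul_of_nonneg_left (by linarith) hΔ.le
        linarith [ht, hrj2]
    rw [ht0] at ht
    simp at ht
    have hj : j = -r := by omega
    have hj2 : j ^ 2 = r ^ 2 := by rw [hj]; ring
    have hq' : Δ * q = Δ * (-(2 * (k * |b| * r))) := by linarith [hEd, hEr, hj2]
    have hqv : q = -(2 * (k * |b| * r)) := mul_left_cancel₀ (by linarith) hq'
    have hkbr : 2 ≤ k * |b| * r := by
      have := mul_le_mul_of_nonneg_left hr1 (by linarith : (0:ℤ) ≤ k * |b|)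
      linarith [hkb]
    rcases h3' with ⟨e, _, _⟩ | ⟨l, _⟩
    · linarith [hqv, hkbr]
    · linarith [hqv, hkbr]
end

section
/- If w = (0,b,c) ∈ ℤ³ is a numerical wall datum with first coordinate a = 0, then 4k²b² < h². In particular, since b ≠ 0 for any numerical wall datum, no numerical wall datum with a = 0 exists when 2k ≥ h. (Case 1 of the proof of the Main Theorem.) -/
/-- Case 1 of the proof of the Main Theorem: a numerical wall datum with `a = 0` satisfies
`4k²b² < h²`; in particular none exists when `2k ≥ h`. -/
theorem wall_datum_case_a_eq_zero (Δ h k : ℤ) (hΔ : 0 < Δ) (hh : 0 < h) (hk : 0 < k)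
    (hgcd : Int.gcd h k = 1) :
    (∀ b c : ℤ, IsWallDatum Δ h k (0, b, c) → 4 * k ^ 2 * b ^ 2 < h ^ 2) ∧
    (2 * k ≥ h → ¬ ∃ b c : ℤ, IsWallDatum Δ h k (0, b, c)) := by
  have key : ∀ b c : ℤ, IsWallDatum Δ h k (0, b, c) →
      4 * k ^ 2 * b ^ 2 < h ^ 2 ∧ b ≠ 0 := by
    intro b c hw
    obtain ⟨hc, ⟨hΓ1, hΓ2⟩, _, hW3, _⟩ := hw
    have hpair : mukaiPair Δ k (0, b, c) (0, b, c) = 2 * Δ * k ^ 2 * b ^ 2 := by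
      simp [mukaiPair]; ring
    -- W3 second branch forced
    have hnn : (0 : ℤ) ≤ 2 * Δ * k ^ 2 * b ^ 2 := by positivity
    rcases hW3 with ⟨heq, -⟩ | ⟨-, hlt, -⟩
    · rw [hpair] at heq; omega
    constructor
    · rw [hpair] at hlt
      have : Δ * (4 * k ^ 2 * b ^ 2) < Δ * h ^ 2 := by linarith
      exact lt_of_mul_lt_mul_left this hΔ.le
    · rintro rfl
      have hΓ0 : wallGamma Δ h k (0, 0, c) = 0 := by
        simp [wallGamma]
      rw [hΓ0] at hΓ1
      have hden : (0 : ℚ) < (h : ℚ) ^ 2 + (k : ℚ) ^ 2 + 1 := by positivity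
      have hnum : (0 : ℚ) < 2 * (k : ℚ) ^ 2 := by
        have : (0 : ℚ) < (k : ℚ) := by exact_mod_cast hk
        positivity
      have : (0 : ℚ) < 2 * (k : ℚ) ^ 2 / ((h : ℚ) ^ 2 + (k : ℚ) ^ 2 + 1) :=
        div_pos hnum hden
      linarith
  refine ⟨fun b c hw => (key b c hw).1, fun hkh ⟨b, c, hw⟩ => ?_⟩
  obtain ⟨h1, h2⟩ := key b c hw
  have hb2 : 1 ≤ b ^ 2 := by
    rcases lt_or_gt_of_ne h2 with h | h <;> nlinarith
  nlinarith [sq_nonneg k]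
end

section
/- If w = (1,b,c) ∈ ℤ³ is a numerical wall datum with first coordinate a = 1 and with j(w) ≥ 0, then b < 0 and 4k²b² < 5h². In particular no such numerical wall datum exists when 4k² ≥ 5h². (Case 2 of the proof of the Main Theorem.) -/
/-- Case 2 of the proof of the Main Theorem: a numerical wall datum with `a = 1` and
`j(w) ≥ 0` satisfies `b < 0` and `4k²b² < 5h²`; in particular none exists when `4k² ≥ 5h²`. -/
theorem wall_datum_case_a_eq_one (Δ h k : ℤ) (hΔ : 0 < Δ) (hh : 0 < h) (hk : 0 < k)
    (hgcd : Int.gcd h k = 1) :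
    (∀ b c : ℤ, IsWallDatum Δ h k (1, b, c) →
      0 ≤ mukaiPair Δ k (1, b, c) (mukaiV Δ h) →
      b < 0 ∧ 4 * k ^ 2 * b ^ 2 < 5 * h ^ 2) ∧
    (4 * k ^ 2 ≥ 5 * h ^ 2 → ¬ ∃ b c : ℤ, IsWallDatum Δ h k (1, b, c) ∧
      0 ≤ mukaiPair Δ k (1, b, c) (mukaiV Δ h)) := by
  have main : ∀ b c : ℤ, IsWallDatum Δ h k (1, b, c) →
      0 ≤ mukaiPair Δ k (1, b, c) (mukaiV Δ h) →
      b < 0 ∧ 4 * k ^ 2 * b ^ 2 < 5 * h ^ 2 := by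
    intro b c hW hj
    obtain ⟨hD, ⟨hΓlo, hΓhi⟩, ⟨h2a, h2b⟩, h3, h4⟩ := hW
    clear h3 h4 hΓhi
    simp only [mukaiPair, mukaiV, wallGamma] at hD hΓlo h2a h2b hj
    have hΓpos : (0:ℚ) < ((-(2 * Δ * k ^ 2 * b) : ℤ) : ℚ) / ((Δ * h ^ 2 * 1 + c : ℤ) : ℚ) := by
      refine lt_of_lt_of_le ?_ hΓlo
      have hhQ : (0:ℚ) < (h:ℚ) := by exact_mod_cast hh
      have hkQ : (0:ℚ) < (k:ℚ) := by exact_mod_cast hk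
      positivity
    -- b ≠ 0
    have hbne : b ≠ 0 := by
      intro hb0
      subst hb0
      norm_num at hΓpos
    -- Γ·b ≤ 0
    have hGb : ((-(2 * Δ * k ^ 2 * b) : ℤ) : ℚ) / ((Δ * h ^ 2 * 1 + c : ℤ) : ℚ) * (b:ℚ) ≤ 0 := by
      have := h2b
      push_cast at this
      push_cast
      linarith
    -- b < 0
    have hbneg : b < 0 := by
      rcases lt_trichotomy b 0 with h' | h' | h'
      · exact h'
      · exact absurd h' hbne
      · exfalso
        have hbQ : (0:ℚ) < (b:ℚ) := by exact_mod_cast h'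
        nlinarith [mul_pos hΓpos hbQ]
    -- numerator positive
    have hNum : (0:ℚ) < ((-(2 * Δ * k ^ 2 * b) : ℤ) : ℚ) := by
      have : (0:ℤ) < -(2 * Δ * k ^ 2 * b) := by
        nlinarith [mul_pos (mul_pos hΔ (pow_pos hk 2)) (by linarith : (0:ℤ) < -b)]
      exact_mod_cast this
    -- denominator positive
    have hDenZ : (0:ℤ) < Δ * h ^ 2 * 1 + c := by
      rcases lt_trichotomy (Δ * h ^ 2 * 1 + c) 0 with h' | h' | h'
      · exfalso
        have h'' : ((Δ * h ^ 2 * 1 + c : ℤ) : ℚ) < 0 := by exact_mod_cast h'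
        have := div_neg_of_pos_of_neg hNum h''
        linarith
      · exact absurd h' hD
      · exact h'
    have hDen : (0:ℚ) < ((Δ * h ^ 2 * 1 + c : ℤ) : ℚ) := by exact_mod_cast hDenZ
    -- key: 2Δk²b² ≤ Δh² + c
    have h2a' : (-1 : ℚ) ≤ ((-(2 * Δ * k ^ 2 * b) : ℤ) : ℚ) * (b:ℚ) / ((Δ * h ^ 2 * 1 + c : ℤ) : ℚ) := by
      rw [div_mul_eq_mul_div] at h2a
      push_cast at h2a ⊢
      linarith
    rw [le_div_iff₀ hDen] at h2a'
    have hkeyQ : ((-(Δ * h ^ 2 * 1 + c) : ℤ) : ℚ) ≤ ((-(2 * Δ * k ^ 2 * b) * b : ℤ) : ℚ) := by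
      push_cast at h2a' ⊢
      linarith
    have hkey : (-(Δ * h ^ 2 * 1 + c) : ℤ) ≤ -(2 * Δ * k ^ 2 * b) * b := by exact_mod_cast hkeyQ
    -- c ≤ Δh²
    have hcle : c ≤ Δ * h ^ 2 := by nlinarith
    -- so 2Δk²b² ≤ 2Δh², hence k²b² ≤ h²
    have hfin : k ^ 2 * b ^ 2 ≤ h ^ 2 := by nlinarith
    exact ⟨hbneg, by nlinarith⟩
  refine ⟨main, ?_⟩
  rintro hge ⟨b, c, hW, hj⟩
  obtain ⟨hb, hlt⟩ := main b c hW hj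
  have hb1 : 1 ≤ b ^ 2 := by nlinarith
  nlinarith
end

section
/- If w = (−1,b,c) ∈ ℤ³ is a numerical wall datum with first coordinate a = −1 and with j(w) ≥ 0, then b > 0, Δk²b² ≥ Δh² − 1, and 4k²b² < 9h². In particular no such numerical wall datum exists when 2k ≥ 3h. (Case 3 of the proof of the Main Theorem.) -/
set_option maxHeartbeats 1000000 in
/-- Case 3 of the proof of the Main Theorem: a numerical wall datum with `a = −1` and
`j(w) ≥ 0` satisfies `b > 0`, `Δk²b² ≥ Δh² − 1` and `4k²b² < 9h²`; in particular none
exists when `2k ≥ 3h`. -/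
theorem wall_datum_case_a_eq_neg_one (Δ h k : ℤ) (hΔ : 0 < Δ) (hh : 0 < h) (hk : 0 < k)
    (hgcd : Int.gcd h k = 1) :
    (∀ b c : ℤ, IsWallDatum Δ h k (-1, b, c) →
      0 ≤ mukaiPair Δ k (-1, b, c) (mukaiV Δ h) →
      0 < b ∧ Δ * h ^ 2 - 1 ≤ Δ * k ^ 2 * b ^ 2 ∧ 4 * k ^ 2 * b ^ 2 < 9 * h ^ 2) ∧
    (2 * k ≥ 3 * h → ¬ ∃ b c : ℤ, IsWallDatum Δ h k (-1, b, c) ∧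
      0 ≤ mukaiPair Δ k (-1, b, c) (mukaiV Δ h)) := by
  have main : ∀ b c : ℤ, IsWallDatum Δ h k (-1, b, c) →
      0 ≤ mukaiPair Δ k (-1, b, c) (mukaiV Δ h) →
      0 < b ∧ Δ * h ^ 2 - 1 ≤ Δ * k ^ 2 * b ^ 2 ∧ 4 * k ^ 2 * b ^ 2 < 9 * h ^ 2 := by
    intro b c hw hj
    obtain ⟨hD0, ⟨hΓ1, hΓ2⟩, -, hW3, -⟩ := hw
    simp only [mukaiPair, mukaiV] at hj hW3
    -- hj : 0 ≤ -(Δ*h^2) - c  (roughly)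
    have hc : c ≤ -(Δ * h ^ 2) := by nlinarith [hj]
    -- extract from W3 : self-pairing ≥ -2 and j ≤ Δh²
    have hself : (-2 : ℤ) ≤ 2 * Δ * k ^ 2 * b * b + 2 * c := by
      rcases hW3 with ⟨h1, _, _⟩ | ⟨h1, _, _, _⟩ <;> nlinarith [h1]
    have hjle : -(Δ * h ^ 2) - c ≤ Δ * h ^ 2 := by
      rcases hW3 with ⟨_, _, h1⟩ | ⟨_, _, _, h1⟩ <;> nlinarith [h1]
    have hcge : -c ≤ 2 * Δ * h ^ 2 := by linarith
    -- rewrite Γ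
    have hden : (0:ℚ) < (Δ:ℚ) * h ^ 2 - c := by
      have : (0:ℤ) < Δ * h ^ 2 - c := by nlinarith
      exact_mod_cast this
    have hΓeq : wallGamma Δ h k (-1,b,c) = (2 * (Δ:ℚ) * k ^ 2 * b) / ((Δ:ℚ) * h ^ 2 - c) := by
      simp only [wallGamma]
      push_cast
      rw [show ((Δ:ℚ) * h ^ 2 * (-1) + c) = -((Δ:ℚ) * h ^ 2 - c) by ring, div_neg, neg_div, neg_neg]
    rw [hΓeq] at hΓ1 hΓ2
    have hΔq : (0:ℚ) < (Δ:ℚ) := by exact_mod_cast hΔ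
    have hhq : (0:ℚ) < (h:ℚ) := by exact_mod_cast hh
    have hkq : (0:ℚ) < (k:ℚ) := by exact_mod_cast hk
    -- b > 0
    have hΓpos : (0:ℚ) < (2 * (Δ:ℚ) * k ^ 2 * b) / ((Δ:ℚ) * h ^ 2 - c) := by
      refine lt_of_lt_of_le ?_ hΓ1
      positivity
    have hbq : (0:ℚ) < (b:ℚ) := by
      have hnum : (0:ℚ) < 2 * (Δ:ℚ) * k ^ 2 * b := (div_pos_iff.mp hΓpos).resolve_right
        (fun ⟨_, h2⟩ => absurd hden (not_lt.mpr h2.le)) |>.1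
      nlinarith [hnum, mul_pos hΔq (pow_pos hkq 2)]
    have hb : 0 < b := by exact_mod_cast hbq
    refine ⟨hb, by nlinarith [hself, hc], ?_⟩
    -- from Γ < k/h
    have key : 2 * (Δ:ℚ) * k ^ 2 * b * h < k * ((Δ:ℚ) * h ^ 2 - c) :=
      (div_lt_div_iff₀ hden hhq).mp hΓ2
    have keyZ : 2 * Δ * k ^ 2 * b * h < k * (Δ * h ^ 2 - c) := by exact_mod_cast key
    -- k(Δh² - c) ≤ 3 Δ k h²
    have h2 : 2 * Δ * k ^ 2 * b * h < 3 * Δ * k * h ^ 2 := by nlinarith [keyZ, hcge, hk]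
    have h3 : 2 * k * b < 3 * h := by nlinarith [h2, mul_pos (mul_pos hΔ hk) hh, hb, hΔ, hk, hh]
    nlinarith [h3, mul_pos (mul_pos (by norm_num : (0:ℤ)<2) hk) hb, hh]

  refine ⟨main, ?_⟩
  rintro hkh ⟨b, c, hw, hj⟩
  obtain ⟨hb, hmid, hlt⟩ := main b c hw hj
  have h4 : 9 * h ^ 2 ≤ 4 * k ^ 2 := by nlinarith [hkh, hh, hk]
  have hb2 : 1 ≤ b ^ 2 := by nlinarith [hb]
  nlinarith [hlt, h4, hb2, mul_nonneg (sq_nonneg k) (by linarith : (0:ℤ) ≤ b ^ 2 - 1)]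
end

section
/- If h = 1, then there exists no numerical wall datum w = (a,b,c) ∈ ℤ³ with a ≥ 2. (The h = 1 subcase of Case 7 of the proof of the Main Theorem.) -/
/-- The `h = 1` subcase of Case 7 of the proof of the Main Theorem: if `h = 1` then there
is no numerical wall datum with `a ≥ 2`. -/
theorem no_wall_datum_a_ge_two_of_h_eq_one (Δ h k : ℤ) (hΔ : 0 < Δ) (hh : h = 1)
    (hk : 0 < k) (hgcd : Int.gcd h k = 1) :
    ¬ ∃ a b c : ℤ, 2 ≤ a ∧ IsWallDatum Δ h k (a, b, c) := by
  subst hh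
  rintro ⟨a, b, c, ha, hne, ⟨hGlo, hGhi⟩, ⟨hW2a, hW2b⟩, hW3, hW4⟩
  have hG : wallGamma Δ 1 k (a, b, c) =
      ((-(2 * Δ * k ^ 2 * b) : ℤ) : ℚ) / ((Δ * 1 ^ 2 * a + c : ℤ) : ℚ) := rfl
  set Γ : ℚ := wallGamma Δ 1 k (a, b, c) with hΓdef
  set D : ℤ := Δ * 1 ^ 2 * a + c with hDdef
  have hW2b' : 0 ≤ -(Γ * (b : ℚ)) + 1 - (a : ℚ) := hW2b
  have hkQ : (0 : ℚ) < (k : ℚ) := by exact_mod_cast hk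
  have hΔQ : (0 : ℚ) < (Δ : ℚ) := by exact_mod_cast hΔ
  have haQ : (2 : ℚ) ≤ (a : ℚ) := by exact_mod_cast ha
  -- Γ > 0
  have hΓpos : 0 < Γ := lt_of_lt_of_le (by positivity) hGlo
  -- b < 0
  have hbQ : (b : ℚ) < 0 := by
    by_contra hbQ
    push_neg at hbQ
    linarith [mul_nonneg hΓpos.le hbQ]
  have hb : b < 0 := by exact_mod_cast hbQ
  -- D > 0
  have hDne : ((D : ℤ) : ℚ) ≠ 0 := Int.cast_ne_zero.mpr hne
  have hNQ : (0 : ℚ) < ((-(2 * Δ * k ^ 2 * b) : ℤ) : ℚ) := by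
    push_cast
    nlinarith [mul_pos (mul_pos hΔQ (pow_pos hkQ 2)) (neg_pos.mpr hbQ)]
  have hDQ : (0 : ℚ) < ((D : ℤ) : ℚ) := by
    rcases lt_trichotomy ((D : ℤ) : ℚ) 0 with h1 | h1 | h1
    · exfalso
      have : Γ < 0 := by rw [hG]; exact div_neg_of_pos_of_neg hNQ h1
      linarith
    · exact absurd h1 hDne
    · exact h1
  have hDpos : (0 : ℤ) < D := by exact_mod_cast hDQ
  -- From Γ < k : -(2Δk²b) < k·D
  have I1 : -(2 * Δ * k ^ 2 * b) < k * D := by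
    have h1 : Γ < (k : ℚ) := by
      calc Γ < (k : ℚ) / ((1 : ℤ) : ℚ) := hGhi
        _ = (k : ℚ) := by norm_num
    rw [hG, div_lt_iff₀ hDQ] at h1
    exact_mod_cast h1
  -- From Γ·b ≤ 1 - a : (a-1)·D ≤ 2Δk²b²
  have I2 : (a - 1) * D ≤ 2 * Δ * k ^ 2 * b ^ 2 := by
    have h1 : Γ * (b : ℚ) ≤ 1 - (a : ℚ) := by linarith
    rw [hG, div_mul_eq_mul_div, div_le_iff₀ hDQ] at h1
    have h2 : (-(2 * Δ * k ^ 2 * b) : ℤ) * b ≤ (1 - a) * D := by exact_mod_cast h1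
    nlinarith [h2]
  -- k·(-b) ≥ a
  have hP : (0 : ℤ) < 2 * Δ * k ^ 2 * (-b) :=
    mul_pos (mul_pos (mul_pos (by norm_num) hΔ) (pow_pos hk 2)) (by omega)
  have h7 : a ≤ k * (-b) := by
    by_contra hcon
    push_neg at hcon
    have hcon' : k * (-b) ≤ a - 1 := by omega
    nlinarith [mul_le_mul_of_nonneg_left I1 (by linarith : (0:ℤ) ≤ a - 1),
      mul_le_mul_of_nonneg_left hcon' hP.le, mul_pos hk hDpos]
  -- Mukai pairings in coordinates
  have hq : mukaiPair Δ k (a, b, c) (a, b, c) = 2 * Δ * k ^ 2 * b ^ 2 - 2 * a * c := by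
    simp only [mukaiPair]; ring
  have hj : mukaiPair Δ k (a, b, c) (mukaiV Δ 1) = Δ * a - c := by
    simp only [mukaiPair, mukaiV]; ring
  rw [hq, hj] at hW3
  rw [hq, hj] at hW4
  set j : ℤ := Δ * a - c with hjdef
  set q : ℤ := 2 * Δ * k ^ 2 * b ^ 2 - 2 * a * c with hqdef
  -- From W4 : D² > (2Δk(-b))², hence D > 2Δk(-b)
  have hsq : (2 * Δ * k * (-b)) ^ 2 < D ^ 2 := by
    have e : D ^ 2 - (2 * Δ * k * (-b)) ^ 2 = j ^ 2 - 2 * Δ * 1 ^ 2 * q := by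
      rw [hjdef, hqdef, hDdef]; ring
    linarith [hW4, e]
  have hX : (0 : ℤ) < 2 * Δ * k * (-b) :=
    mul_pos (mul_pos (mul_pos (by norm_num) hΔ) hk) (by omega)
  have hDgt : 2 * Δ * k * (-b) < D := by nlinarith [hsq, hDpos, hX]
  -- j < 2Δa - 2Δk(-b)
  have eD : D = 2 * Δ * a - j := by rw [hDdef, hjdef]; ring
  have hjlt : j + 2 * Δ * k * (-b) < 2 * Δ * a := by linarith [eD, hDgt]
  -- j ≥ -Δ
  have hjlow : -Δ ≤ j := by
    rcases hW3 with ⟨_, h1, _⟩ | ⟨h0, _, h1, _⟩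
    · linarith [h1]
    · linarith [h0, h1, hΔ]
  -- a - k(-b) ≥ 0, hence k(-b) = a
  have h11 : k * (-b) ≤ a := by
    by_contra hcon
    push_neg at hcon
    have hcon' : a + 1 ≤ k * (-b) := by omega
    linarith [hjlt, hjlow, hΔ, mul_le_mul_of_nonneg_left hcon' (by linarith : (0:ℤ) ≤ 2 * Δ)]
  have hkba : k * (-b) = a := le_antisymm h11 h7
  -- Hence k²b² = a², q = 2aj, and j < 0
  have hk2b2 : k ^ 2 * b ^ 2 = a ^ 2 := by
    calc k ^ 2 * b ^ 2 = (k * (-b)) ^ 2 := by ring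
      _ = a ^ 2 := by rw [hkba]
  have hq2aj : q = 2 * a * j := by
    rw [hqdef, hjdef]; linear_combination (2 * Δ) * hk2b2
  have e2 : 2 * Δ * k * (-b) = 2 * Δ * a := by
    rw [show 2 * Δ * k * (-b) = 2 * Δ * (k * (-b)) from by ring, hkba]
  have hjneg : j < 0 := by linarith [hjlt, e2]
  clear_value j q
  clear hW2a hW2b hW2b' hG hGlo hGhi hΓpos hbQ hkQ hΔQ haQ hNQ hDQ hDne hq hj hW4 hsq
  rcases hW3 with ⟨hqm2, _, _⟩ | ⟨h0, _, h1, _⟩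
  · -- q = -2 : then a·j = -1, impossible for a ≥ 2
    have h2aj : 2 * a * j = -2 := by rw [← hq2aj]; exact hqm2
    have haj : a * j = -1 := by linarith
    have hjle : j ≤ -1 := by omega
    linarith [haj, ha, mul_le_mul_of_nonneg_left hjle (by linarith : (0:ℤ) ≤ a)]
  · -- q ≥ 0 : then j ≥ 1, contradicting j < 0
    linarith [h0, h1]
end

section
/- Suppose h ≥ 2 and w = (a,b,c) ∈ ℤ³ is a numerical wall datum with a ≥ 2. Then: b < 0; ha + kb ≤ h − 1; −Δh² ≤ j(w) < 2Δh(ha + kb); a ≤ Δ(h−1)² + 1; and 2k(−b) < 2Δh(h−1)² + 3h. In particular no numerical wall datum with a ≥ 2 exists when 2k ≥ 2Δh(h−1)² + 3h. (Case 7 of the proof of the Main Theorem.) -/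
/-- Case 7 of the proof of the Main Theorem: for `h ≥ 2`, a numerical wall datum with
`a ≥ 2` satisfies `b < 0`, `ha + kb ≤ h − 1`, `−Δh² ≤ j(w) < 2Δh(ha + kb)`,
`a ≤ Δ(h−1)² + 1` and `2k(−b) < 2Δh(h−1)² + 3h`; in particular none exists when
`2k ≥ 2Δh(h−1)² + 3h`. -/
theorem wall_datum_case_a_ge_two (Δ h k : ℤ) (hΔ : 0 < Δ) (hh : 2 ≤ h) (hk : 0 < k)
    (hgcd : Int.gcd h k = 1) :
    (∀ a b c : ℤ, IsWallDatum Δ h k (a, b, c) → 2 ≤ a →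
      b < 0 ∧ h * a + k * b ≤ h - 1 ∧
      -(Δ * h ^ 2) ≤ mukaiPair Δ k (a, b, c) (mukaiV Δ h) ∧
      mukaiPair Δ k (a, b, c) (mukaiV Δ h) < 2 * Δ * h * (h * a + k * b) ∧
      a ≤ Δ * (h - 1) ^ 2 + 1 ∧
      2 * k * (-b) < 2 * Δ * h * (h - 1) ^ 2 + 3 * h) ∧
    (2 * k ≥ 2 * Δ * h * (h - 1) ^ 2 + 3 * h →
      ¬ ∃ a b c : ℤ, 2 ≤ a ∧ IsWallDatum Δ h k (a, b, c)) := by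
  have main : ∀ a b c : ℤ, IsWallDatum Δ h k (a, b, c) → 2 ≤ a →
      b < 0 ∧ h * a + k * b ≤ h - 1 ∧
      -(Δ * h ^ 2) ≤ mukaiPair Δ k (a, b, c) (mukaiV Δ h) ∧
      mukaiPair Δ k (a, b, c) (mukaiV Δ h) < 2 * Δ * h * (h * a + k * b) ∧
      a ≤ Δ * (h - 1) ^ 2 + 1 ∧
      2 * k * (-b) < 2 * Δ * h * (h - 1) ^ 2 + 3 * h := by
    intro a b c hW ha
    obtain ⟨hD0, ⟨hG1, hG2⟩, ⟨hB1, hB2⟩, hW3, hW4⟩ := hW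
    have hB1' : 0 ≤ wallGamma Δ h k (a, b, c) * (b : ℚ) + (a : ℚ) := hB1
    have hB2' : 0 ≤ -(wallGamma Δ h k (a, b, c) * (b : ℚ)) + 1 - (a : ℚ) := hB2
    have Γdef : wallGamma Δ h k (a, b, c)
        = ((-(2 * Δ * k ^ 2 * b) : ℤ) : ℚ) / ((Δ * h ^ 2 * a + c : ℤ) : ℚ) := rfl
    have hhQ : (0 : ℚ) < (h : ℚ) := by exact_mod_cast (by linarith : (0:ℤ) < h)
    have hkQ : (0 : ℚ) < (k : ℚ) := by exact_mod_cast hk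
    have hΔQ : (0 : ℚ) < (Δ : ℚ) := by exact_mod_cast hΔ
    have haQ : (2 : ℚ) ≤ (a : ℚ) := by exact_mod_cast ha
    have hGpos : 0 < wallGamma Δ h k (a, b, c) := by
      refine lt_of_lt_of_le ?_ hG1
      exact div_pos (mul_pos two_pos (pow_pos hkQ 2)) (by positivity)
    have hbneg : b < 0 := by
      rcases lt_or_ge b 0 with h' | h'
      · exact h'
      · exfalso
        have hb0 : (0 : ℚ) ≤ (b : ℚ) := by exact_mod_cast h'
        have := mul_nonneg hGpos.le hb0
        linarith
    have hbQ : (b : ℚ) < 0 := by exact_mod_cast hbneg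
    have hNpos : (0 : ℚ) < ((-(2 * Δ * k ^ 2 * b) : ℤ) : ℚ) := by
      have h0 : 0 < (Δ : ℚ) * (k : ℚ) ^ 2 * (-(b : ℚ)) :=
        mul_pos (mul_pos hΔQ (pow_pos hkQ 2)) (by linarith)
      push_cast
      linarith
    have hGpos' : 0 < ((-(2 * Δ * k ^ 2 * b) : ℤ) : ℚ) / ((Δ * h ^ 2 * a + c : ℤ) : ℚ) :=
      Γdef ▸ hGpos
    have hDQpos : (0 : ℚ) < ((Δ * h ^ 2 * a + c : ℤ) : ℚ) := by
      rcases div_pos_iff.mp hGpos' with ⟨_, h2⟩ | ⟨h1, _⟩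
      · exact h2
      · linarith
    have hDpos : 0 < Δ * h ^ 2 * a + c := by exact_mod_cast hDQpos
    -- Γ < k/h  ⟹  N·h < k·D
    have hG2' : ((-(2 * Δ * k ^ 2 * b) : ℤ) : ℚ) / ((Δ * h ^ 2 * a + c : ℤ) : ℚ)
        < (k : ℚ) / (h : ℚ) := Γdef ▸ hG2
    have hint1Q : ((-(2 * Δ * k ^ 2 * b) : ℤ) : ℚ) * (h : ℚ)
        < (k : ℚ) * ((Δ * h ^ 2 * a + c : ℤ) : ℚ) := by
      have := (div_lt_div_iff₀ hDQpos hhQ).mp hG2'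
      linarith
    have hint1 : (-(2 * Δ * k ^ 2 * b)) * h < k * (Δ * h ^ 2 * a + c) := by
      exact_mod_cast hint1Q
    have hDgt : 2 * Δ * h * k * (-b) < Δ * h ^ 2 * a + c := by
      have h1 : k * (2 * Δ * h * k * (-b)) < k * (Δ * h ^ 2 * a + c) := by linarith [hint1]
      exact lt_of_mul_lt_mul_left h1 hk.le
    -- Γ·b as a single fraction
    have e1 : wallGamma Δ h k (a, b, c) * (b : ℚ)
        = (((-(2 * Δ * k ^ 2 * b)) * b : ℤ) : ℚ) / ((Δ * h ^ 2 * a + c : ℤ) : ℚ) := by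
      rw [Γdef]
      push_cast
      ring
    have hB1'' : -(a : ℚ)
        ≤ (((-(2 * Δ * k ^ 2 * b)) * b : ℤ) : ℚ) / ((Δ * h ^ 2 * a + c : ℤ) : ℚ) := by
      rw [← e1]; linarith
    have hint2Q := (le_div_iff₀ hDQpos).mp hB1''
    have hint2 : (-a) * (Δ * h ^ 2 * a + c) ≤ (-(2 * Δ * k ^ 2 * b)) * b := by
      exact_mod_cast hint2Q
    have hB2'' : (((-(2 * Δ * k ^ 2 * b)) * b : ℤ) : ℚ) / ((Δ * h ^ 2 * a + c : ℤ) : ℚ)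
        ≤ 1 - (a : ℚ) := by
      rw [← e1]; linarith
    have hint3Q := (div_le_iff₀ hDQpos).mp hB2''
    have hint3 : (-(2 * Δ * k ^ 2 * b)) * b ≤ (1 - a) * (Δ * h ^ 2 * a + c) := by
      exact_mod_cast hint3Q
    -- Mukai pairings explicitly
    have hq : mukaiPair Δ k (a, b, c) (a, b, c) = 2 * Δ * k ^ 2 * b ^ 2 - 2 * (a * c) := by
      simp [mukaiPair]; ring
    have hj : mukaiPair Δ k (a, b, c) (mukaiV Δ h) = Δ * h ^ 2 * a - c := by
      simp [mukaiPair, mukaiV]; ring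
    rw [hq, hj] at hW3
    have hΔh2 : 0 < Δ * h ^ 2 := mul_pos hΔ (pow_pos (by linarith) 2)
    have hjle : Δ * h ^ 2 * a - c ≤ Δ * h ^ 2 := by
      rcases hW3 with ⟨_, _, h3⟩ | ⟨_, _, _, h4⟩ <;> linarith
    have hjge : -(Δ * h ^ 2) ≤ Δ * h ^ 2 * a - c := by
      rcases hW3 with ⟨_, h2, _⟩ | ⟨h1, _, h3, _⟩
      · exact h2
      · linarith
    have hqge : -2 ≤ 2 * Δ * k ^ 2 * b ^ 2 - 2 * (a * c) := by
      rcases hW3 with ⟨h1, _, _⟩ | ⟨h1, _, _, _⟩ <;> linarith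
    -- (ii)  h a + k b ≤ h - 1
    have hbp : 0 < -b := by linarith
    have hPk : 0 < Δ * (k * (-b)) := mul_pos hΔ (mul_pos hk hbp)
    have hDge : 2 * Δ * h * k * (-b) + 1 ≤ Δ * h ^ 2 * a + c := Int.add_one_le_iff.mpr hDgt
    have hprod : (a - 1) * 1 ≤ (a - 1) * (Δ * h ^ 2 * a + c - 2 * Δ * h * k * (-b)) :=
      mul_le_mul_of_nonneg_left (by linarith) (by linarith)
    have hstep : a - 1 ≤ 2 * (Δ * (k * (-b))) * (k * (-b) - h * (a - 1)) := by linarith [hint3, hprod]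
    have hfin : 0 < k * (-b) - h * (a - 1) := by
      by_contra h'
      push_neg at h'
      have : 2 * (Δ * (k * (-b))) * (k * (-b) - h * (a - 1)) ≤ 0 := by linarith [mul_nonneg hPk.le (neg_nonneg.mpr h')]
      linarith
    have hs1 : h * a + k * b ≤ h - 1 := by
      have := Int.add_one_le_iff.mpr hfin
      linarith
    -- (iv) j < 2Δh(ha + kb)
    have hjlt : Δ * h ^ 2 * a - c < 2 * Δ * h * (h * a + k * b) := by linarith [hDgt]
    -- lower bound for s = ha + kb :  1 - h ≤ 2s
    have hΔh : 0 < Δ * h := mul_pos hΔ (by linarith)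
    have h2s : -(Δ * h ^ 2) < 2 * Δ * h * (h * a + k * b) := lt_of_le_of_lt hjge hjlt
    have hs_lb : 1 - h ≤ 2 * (h * a + k * b) := by
      by_contra h'
      push_neg at h'
      have h'' : 2 * (h * a + k * b) ≤ -h := by omega
      have := mul_le_mul_of_nonneg_left h'' hΔh.le
      linarith [this, h2s]
    -- s² ≤ (h-1)²
    have hs_sq : (h * a + k * b) ^ 2 ≤ (h - 1) ^ 2 := by
      have e2 : 0 ≤ h - 1 + (h * a + k * b) := by linarith
      have e3 : 0 ≤ h - 1 - (h * a + k * b) := by linarith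
      linarith [mul_nonneg e3 e2]
    -- (v)  a ≤ Δ(h-1)² + 1 : from q ≥ -2 and D ≥ 2Δh k(-b) + 1
    have haD : a * (2 * Δ * h * k * (-b) + 1) ≤ a * (Δ * h ^ 2 * a + c) :=
      mul_le_mul_of_nonneg_left hDge (by linarith)
    have hs2 : a - 1 ≤ Δ * (h * a + k * b) ^ 2 := by linarith [hqge, haD]
    have hub : a ≤ Δ * (h - 1) ^ 2 + 1 := by
      have := mul_le_mul_of_nonneg_left hs_sq hΔ.le
      linarith
    -- (vi)
    have hlast : 2 * k * (-b) < 2 * Δ * h * (h - 1) ^ 2 + 3 * h := by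
      have hha : h * a ≤ h * (Δ * (h - 1) ^ 2 + 1) := mul_le_mul_of_nonneg_left hub (by linarith)
      linarith [hs_lb, hha]
    rw [hj]
    exact ⟨hbneg, hs1, hjge, hjlt, hub, hlast⟩
  refine ⟨main, ?_⟩
  rintro hbig ⟨a, b, c, ha2, hW⟩
  obtain ⟨hb, _, _, _, _, hlast⟩ := main a b c hW ha2
  have h1 : 0 ≤ k * (-b - 1) := mul_nonneg hk.le (by linarith)
  linarith
end

section
/- Suppose Δ = 1 and h = 1 (so S has degree 2k² and we consider Hilb²(S)). If k ≥ 2, then there exists no numerical wall datum. If k = 1, then w = (a,b,c) is a numerical wall datum if and only if w = (1,−1,2); this unique wall corresponds to the Mukai flop between Hilb²(S) and the Beauville–Mukai system M(0,1,−1), so for k = 1 the movable cone of Hilb²(S) has exactly two chambers, and for k ≥ 2 it has only one chamber. (Proposition on the case Δ = h = 1.) -/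
set_option maxHeartbeats 2000000 in
theorem key_wall (k : ℤ) (hk : 0 < k) (a b c : ℤ) (hw : IsWallDatum 1 1 k (a,b,c)) :
    k = 1 ∧ a = 1 ∧ b = -1 ∧ c = 2 := by
  obtain ⟨hs, ⟨hGl, hGu⟩, ⟨h2a, h2b⟩, h3, h4⟩ := hw
  simp only [wallGamma, mukaiPair, mukaiV] at *
  push_cast at hGl hGu h2a h2b
  norm_num at hs hGl hGu h2a h2b h3 h4
  have hkQ : (0:ℚ) < (k:ℚ) := by exact_mod_cast hk
  have hden : (0:ℚ) < 1 + (k:ℚ)^2 + 1 := by positivity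
  obtain ⟨m, hm⟩ : ∃ m, m = k * b := ⟨_, rfl⟩
  rcases lt_trichotomy (a + c) 0 with hneg | h0 | hpos
  · -- s < 0 case : contradiction
    exfalso
    have hSQ : ((a:ℚ) + c) < 0 := by exact_mod_cast hneg
    have hTQ : (0:ℚ) < -((a:ℚ) + c) := by linarith
    have e : -(2*(k:ℚ)^2*(b:ℚ)) / ((a:ℚ)+(c:ℚ)) = (2*(k:ℚ)^2*(b:ℚ)) / (-((a:ℚ)+(c:ℚ))) := by
      rw [div_neg, neg_div]
    rw [e] at hGl hGu h2a h2b
    have hAq := (div_le_div_iff₀ hden hTQ).mp hGl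
    have hAz : 2*k^2*(-(a+c)) ≤ 2*k^2*b*(1+k^2+1) := by exact_mod_cast hAq
    have hb : 1 ≤ b := by
      nlinarith [pow_pos hk 2, mul_pos (pow_pos hk 2) (by linarith : (0:ℤ) < -(a+c)),
        mul_pos (pow_pos hk 2) (pow_pos hk 2)]
    have hm1 : 1 ≤ m := by
      rw [hm]
      have := mul_le_mul_of_nonneg_left hb hk.le
      linarith
    have hBz : 2*k^2*b < k*(-(a+c)) := by
      have := (div_lt_iff₀ hTQ).mp hGu
      exact_mod_cast this
    have hmS : 2*m < -(a+c) := by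
      rw [hm]
      have h' : k * (2*(k*b)) < k * (-(a+c)) := by linarith [hBz]
      exact lt_of_mul_lt_mul_left h' hk.le
    have eG : (2*(k:ℚ)^2*b) / (-((a:ℚ)+c)) * (-((a:ℚ)+c)) = 2*(k:ℚ)^2*b :=
      div_mul_cancel₀ _ (ne_of_gt hTQ)
    have key1 : ((2*(k:ℚ)^2*b)/(-((a:ℚ)+c)) * b + a) * (-((a:ℚ)+c))
        = 2*(k:ℚ)^2*b*b + a*(-((a:ℚ)+c)) := by
      rw [add_mul, mul_right_comm, eG]
    have hCq := mul_nonneg h2a hTQ.le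
    rw [key1] at hCq
    have hCz : (0:ℤ) ≤ 2*k^2*b*b + a*(-(a+c)) := by exact_mod_cast hCq
    have hCm : 0 ≤ 2*m^2 - a*(a+c) := by rw [hm]; linarith [hCz]
    have h2b' : (0:ℚ) ≤ 1 - ((2*(k:ℚ)^2*b)/(-((a:ℚ)+c)) * b + a) := by linarith
    have key2 : ((1:ℚ) - ((2*(k:ℚ)^2*b)/(-((a:ℚ)+c)) * b + a)) * (-((a:ℚ)+c))
        = (1-(a:ℚ))*(-((a:ℚ)+c)) - 2*(k:ℚ)^2*b*b := by
      rw [sub_mul, key1]; ring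
    have hDq := mul_nonneg h2b' hTQ.le
    rw [key2] at hDq
    have hDz : (0:ℤ) ≤ (1-a)*(-(a+c)) - 2*k^2*b*b := by exact_mod_cast hDq
    have hDm : 0 ≤ (1-a)*(-(a+c)) - 2*m^2 := by rw [hm]; linarith [hDz]
    have hone : 1*1 ≤ m*m := by nlinarith [sq_nonneg (m-1), hm1]
    rcases h3 with ⟨e2, hj1, hj2⟩ | ⟨e0, e1, e2', e3⟩
    · -- spherical
      have hmsq : m^2 = a*c - 1 := by rw [hm]; linarith [e2]
      have hj : a - c = -1 ∨ a - c = 0 ∨ a - c = 1 := by omega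
      rcases hj with hj | hj | hj
      · -- c = a + 1
        have hc : c = a + 1 := by omega
        subst hc
        linarith [hCm, hDm, hmsq]
      · -- a = c
        have hc : c = a := by omega
        subst hc
        have hq : m ≤ -c-1 := by omega
        have hsq : m*m ≤ (-c-1)*(-c-1) := mul_self_le_mul_self (by omega) hq
        have ha1 : -1 ≤ c := by linarith [hmsq, hsq]
        have ha2 : c = -1 := by omega
        subst ha2
        linarith [hmsq, hone]
      · -- a = c + 1
        have ha : a = c + 1 := by omega
        subst ha
        have hq : m ≤ -c-1 := by omega
        have hsq : m*m ≤ (-c-1)*(-c-1) := mul_self_le_mul_self (by omega) hq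
        linarith [hmsq, hCm, hsq]
    · -- isotropic
      have hq0 : 2*k^2*b*b - a*c - a*c = 0 := by
        have h1 : 2*(2*k^2*b*b - a*c - a*c) ≤ 0 :=
          Int.lt_add_one_iff.mp (by linarith [e1])
        linarith [e0]
      have hmsq : m^2 = a*c := by rw [hm]; linarith [hq0]
      have h1c : 1 ≤ a - c := by linarith [e2', hq0]
      have ha : a = c + 1 := by omega
      subst ha
      have hq : m ≤ -c-1 := by omega
      have hsq : m*m ≤ (-c-1)*(-c-1) := mul_self_le_mul_self (by omega) hq
      have hc1 : -1 ≤ c := by linarith [hmsq, hsq]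
      have hc2 : c = -1 := by omega
      subst hc2
      linarith [hmsq, hone]
  · exact absurd h0 hs
  · -- s > 0
    have hSQ : (0:ℚ) < ((a:ℚ) + c) := by exact_mod_cast hpos
    have hAq := (div_le_div_iff₀ hden hSQ).mp hGl
    have hAz : 2*k^2*(a+c) ≤ -(2*k^2*b)*(1+k^2+1) := Int.cast_le (R := ℚ).mp (by push_cast; linarith [hAq])
    have hb : b ≤ -1 := by
      nlinarith [pow_pos hk 2, mul_pos (pow_pos hk 2) hpos,
        mul_pos (pow_pos hk 2) (pow_pos hk 2)]
    have hm1 : m ≤ -1 := by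
      rw [hm]
      have := mul_le_mul_of_nonneg_left hb hk.le
      linarith
    have hBz : -(2*k^2*b) < k*(a+c) := by
      have := (div_lt_iff₀ hSQ).mp hGu
      exact Int.cast_lt (R := ℚ).mp (by push_cast; linarith [this])
    have hmS : -(2*m) < a+c := by
      rw [hm]
      have h' : k * (-(2*(k*b))) < k * (a+c) := by linarith [hBz]
      exact lt_of_mul_lt_mul_left h' hk.le
    have eG : (-(2*(k:ℚ)^2*b)) / (((a:ℚ)+c)) * (((a:ℚ)+c)) = -(2*(k:ℚ)^2*b) :=
      div_mul_cancel₀ _ (ne_of_gt hSQ)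
    have key1 : ((-(2*(k:ℚ)^2*b))/((a:ℚ)+c) * b + a) * ((a:ℚ)+c)
        = -(2*(k:ℚ)^2*b)*b + a*((a:ℚ)+c) := by
      rw [add_mul, mul_right_comm, eG]
    have hCq := mul_nonneg h2a hSQ.le
    rw [key1] at hCq
    have hCz : (0:ℤ) ≤ -(2*k^2*b)*b + a*(a+c) := by exact_mod_cast hCq
    have hCm : 0 ≤ a*(a+c) - 2*m^2 := by rw [hm]; linarith [hCz]
    have h2b' : (0:ℚ) ≤ 1 - ((-(2*(k:ℚ)^2*b))/((a:ℚ)+c) * b + a) := by linarith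
    have key2 : ((1:ℚ) - ((-(2*(k:ℚ)^2*b))/((a:ℚ)+c) * b + a)) * ((a:ℚ)+c)
        = (1-(a:ℚ))*((a:ℚ)+c) + 2*(k:ℚ)^2*b*b := by
      rw [sub_mul, key1]; ring
    have hDq := mul_nonneg h2b' hSQ.le
    rw [key2] at hDq
    have hDz : (0:ℤ) ≤ (1-a)*(a+c) + 2*k^2*b*b := by exact_mod_cast hDq
    have hDm : 0 ≤ (1-a)*(a+c) + 2*m^2 := by rw [hm]; linarith [hDz]
    have hone : 1*1 ≤ m*m := by nlinarith [sq_nonneg (m+1), hm1]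
    rcases h3 with ⟨e2, hj1, hj2⟩ | ⟨e0, e1, e2', e3⟩
    · -- spherical
      have hmsq : m^2 = a*c - 1 := by rw [hm]; linarith [e2]
      have hj : a - c = -1 ∨ a - c = 0 ∨ a - c = 1 := by omega
      rcases hj with hj | hj | hj
      · -- c = a + 1 : the solution
        have hc : c = a + 1 := by omega
        subst hc
        have ha1 : 1 ≤ a := by
          have : (0:ℤ) ≤ 3*a - 1 := by linarith [hDm, hmsq]
          omega
        have hq : -m ≤ a := by omega
        have hsq : (-m)*(-m) ≤ a*a := mul_self_le_mul_self (by linarith) hq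
        have ha2 : a ≤ 1 := by nlinarith [hmsq, hsq]
        have haa : a = 1 := by omega
        subst haa
        have hm2 : m^2 = 1 := by rw [hmsq]; ring
        have hmm : m = -1 := by
          have h0 : (m+1)*(m-1) = 0 := by linear_combination hm2
          rcases mul_eq_zero.mp h0 with h | h
          · omega
          · omega
        have hkb : k * b = -1 := by rw [← hm, hmm]
        have hkk : 0 ≤ k*(-b-1) := mul_nonneg hk.le (by linarith)
        have hk1 : k = 1 := by
          have : k ≤ 1 := by nlinarith [hkk, hkb]
          omega
        have hb1 : b = -1 := by rw [hk1] at hkb; linarith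
        exact ⟨hk1, rfl, hb1, by norm_num⟩
      · -- a = c
        exfalso
        have hc : c = a := by omega
        subst hc
        have ha1 : 1 ≤ c := by omega
        have hq : -m ≤ c - 1 := by omega
        have hsq : (-m)*(-m) ≤ (c-1)*(c-1) := mul_self_le_mul_self (by linarith) hq
        have ha2 : c ≤ 1 := by nlinarith [hmsq, hsq]
        have haa : c = 1 := by omega
        subst haa
        have : m^2 = 0 := by rw [hmsq]; ring
        nlinarith [hone, this]
      · -- a = c + 1
        exfalso
        have ha : a = c + 1 := by omega
        subst ha
        have hc2 : 2 ≤ c := by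
          have : (0:ℤ) ≤ c - 2 := by linarith [hDm, hmsq]
          omega
        have hq : -m ≤ c := by omega
        have hsq : (-m)*(-m) ≤ c*c := mul_self_le_mul_self (by linarith) hq
        nlinarith [hmsq, hsq]
    · -- isotropic
      exfalso
      have hq0 : 2*k^2*b*b - a*c - a*c = 0 := by
        have h1 : 2*(2*k^2*b*b - a*c - a*c) ≤ 0 :=
          Int.lt_add_one_iff.mp (by linarith [e1])
        linarith [e0]
      have hmsq : m^2 = a*c := by rw [hm]; linarith [hq0]
      have h1c : 1 ≤ a - c := by linarith [e2', hq0]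
      have ha : a = c + 1 := by omega
      subst ha
      have hq : -m ≤ c := by omega
      have hsq : (-m)*(-m) ≤ c*c := mul_self_le_mul_self (by linarith) hq
      have hc1 : c ≤ 0 := by nlinarith [hmsq, hsq]
      have hc0 : 0 ≤ c := by omega
      have hcc : c = 0 := by omega
      subst hcc
      have : m^2 = 0 := by rw [hmsq]; ring
      nlinarith [hone, this]

/-- Proposition on the case `Δ = h = 1`: for `k ≥ 2` there is no numerical wall datum
(the movable cone of `Hilb²(S)` has one chamber), and for `k = 1` the numerical wall data
are exactly `w = (1,−1,2)` (the Mukai flop to the Beauville–Mukai system `M(0,1,−1)`,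
giving two chambers). -/
theorem wall_data_delta_one_h_one (k : ℤ) (hk : 0 < k) :
    (2 ≤ k → ¬ ∃ w : ℤ × ℤ × ℤ, IsWallDatum 1 1 k w) ∧
    (k = 1 → ∀ w : ℤ × ℤ × ℤ, IsWallDatum 1 1 k w ↔ w = (1, -1, 2)) := by
  constructor
  · rintro hk2 ⟨⟨a, b, c⟩, hw⟩
    obtain ⟨hk1, -, -, -⟩ := key_wall k hk a b c hw
    omega
  · rintro rfl ⟨a, b, c⟩
    constructor
    · intro hw
      obtain ⟨-, h1, h2, h3⟩ := key_wall 1 hk a b c hw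
      simp [h1, h2, h3, Prod.ext_iff]
    · rintro h
      cases h
      exact ⟨by norm_num, ⟨by norm_num [wallGamma], by norm_num [wallGamma]⟩,
        ⟨by norm_num [wallGamma], by norm_num [wallGamma]⟩,
        Or.inl ⟨by norm_num [mukaiPair], by norm_num [mukaiPair, mukaiV],
          by norm_num [mukaiPair, mukaiV]⟩,
        by norm_num [mukaiPair, mukaiV]⟩
end
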